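/- A feasible flow f is an optimal solution of the minimum s-t flow problem with lower bounds (minimize f_{ts} subject to conservation and f_{uv} ≥ w_{uv}) if and only if there is no directed path from t to s in the residual graph G_f. -/

import Mathlib

open scoped Classical

section Helpers

variable {α : Type*}

lemma not_nodup_split {L : List α} (h : ¬ L.Nodup) :
    ∃ (xs : List α) (v : α) (ys zs : List α), L = xs ++ v :: (ys ++ v :: zs) := by
  induction L with
  | nil => simp at h
  | cons x L ih =>
    by_cases hx : x ∈ L
    · obtain ⟨ys, zs, rfl⟩ := List.append_of_mem hx
      exact ⟨[], x, ys, zs, rfl⟩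
    · have hL : ¬ L.Nodup := by
        intro hn; exact h (List.nodup_cons.mpr ⟨hx, hn⟩)
      obtain ⟨xs, v, ys, zs, rfl⟩ := ih hL
      exact ⟨x :: xs, v, ys, zs, rfl⟩

lemma chain_splice {r : α → α → Prop} {a v : α} {xs ys zs : List α}
    (h : List.Chain r a (xs ++ v :: (ys ++ v :: zs))) :
    List.Chain r a (xs ++ v :: zs) := by
  unfold List.Chain at h ⊢; rw [List.isChain_cons_split] at h ⊢
  refine ⟨h.1, ?_⟩
  have h2 := h.2
  rw [List.isChain_cons_split] at h2
  exact h2.2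

lemma getLast_splice {a v : α} (xs ys zs : List α) :
    (a :: (xs ++ v :: (ys ++ v :: zs))).getLast (List.cons_ne_nil _ _)
      = (a :: (xs ++ v :: zs)).getLast (List.cons_ne_nil _ _) := by
  have h1 : a :: (xs ++ v :: (ys ++ v :: zs)) = (a :: xs) ++ (v :: ys) ++ (v :: zs) := by
    simp
  have h2 : a :: (xs ++ v :: zs) = (a :: xs) ++ (v :: zs) := by simp
  rw [List.getLast_congr _ (by simp) h1, List.getLast_congr _ (by simp) h2,
    List.getLast_append, List.getLast_append]
  simp

lemma exists_nodup_chain {r : α → α → Prop} {a b : α} (h : Relation.ReflTransGen r a b) :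
    ∃ l, List.Chain r a l ∧ (a :: l).getLast (List.cons_ne_nil _ _) = b ∧ (a :: l).Nodup := by
  obtain ⟨l, hc, hl⟩ := List.exists_isChain_cons_of_relationReflTransGen h
  have key : ∀ n (l : List α), l.length ≤ n → List.Chain r a l →
      (a :: l).getLast (List.cons_ne_nil _ _) = b →
      ∃ l', List.Chain r a l' ∧ (a :: l').getLast (List.cons_ne_nil _ _) = b ∧
        (a :: l').Nodup := by
    intro n
    induction n with
    | zero =>
      intro l hn hc hl
      have : l = [] := List.length_eq_zero_iff.mp (Nat.le_zero.mp hn)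
      subst this
      exact ⟨[], hc, hl, List.nodup_singleton a⟩
    | succ n ih =>
      intro l hn hc hl
      by_cases hnd : (a :: l).Nodup
      · exact ⟨l, hc, hl, hnd⟩
      · obtain ⟨xs, v, ys, zs, he⟩ := not_nodup_split hnd
        match xs, he with
        | [], he =>
          have hav : a = v := by injection he
          subst hav
          have hl' : l = ys ++ a :: zs := by injection he
          subst hl'
          have hc' : List.Chain r a zs := by
            unfold List.Chain at hc; rw [List.isChain_cons_split] at hc; exact hc.2
          have hlast : (a :: zs).getLast (List.cons_ne_nil _ _) = b := by
            rw [← hl]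
            have h1 : a :: (ys ++ a :: zs) = (a :: ys) ++ (a :: zs) := by simp
            rw [List.getLast_congr _ (by simp) h1, List.getLast_append]
            simp
          refine ih zs ?_ hc' hlast
          have := hn
          simp [List.length_append] at this ⊢
          omega
        | x :: xs, he =>
          have hax : a = x := by injection he
          subst hax
          have hl' : l = xs ++ v :: (ys ++ v :: zs) := by injection he
          subst hl'
          have hc' := chain_splice hc
          have hlast : (a :: (xs ++ v :: zs)).getLast (List.cons_ne_nil _ _) = b := by
            rw [← getLast_splice xs ys zs]; exact hl
          refine ih _ ?_ hc' hlast
          simp [List.length_append] at hn ⊢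
          omega
  exact key l.length l le_rfl hc hl

lemma chain_pairs {r : α → α → Prop} : ∀ {l : List α} {a : α}, List.Chain r a l →
    ∀ p ∈ (a :: l).zip l, r p.1 p.2 := by
  intro l
  induction l with
  | nil => intro a _ p hp; simp at hp
  | cons x l ih =>
    intro a hc p hp
    unfold List.Chain at hc; rw [List.isChain_cons_cons] at hc
    simp only [List.zip_cons_cons, List.mem_cons] at hp
    rcases hp with rfl | hp
    · exact hc.1
    · exact ih hc.2 p hp

lemma not_both_mem_zip {L : List α} (hnd : L.Nodup) {u v : α}
    (h1 : (u, v) ∈ L.zip L.tail) (h2 : (v, u) ∈ L.zip L.tail) : False := by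
  induction L with
  | nil => simp at h1
  | cons a L ih =>
    cases L with
    | nil => simp at h1
    | cons x L' =>
      rw [List.nodup_cons] at hnd
      simp only [List.tail_cons, List.zip_cons_cons, List.mem_cons] at h1 h2
      rcases h1 with h1 | h1 <;> rcases h2 with h2 | h2
      · have hu : u = a := (Prod.mk.injEq _ _ _ _ ▸ h1).1
        have hu' : u = x := (Prod.mk.injEq _ _ _ _ ▸ h2).2
        exact hnd.1 (by rw [← hu, hu']; exact List.mem_cons_self)
      · have hu : u = a := (Prod.mk.injEq _ _ _ _ ▸ h1).1
        have := (List.of_mem_zip h2).2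
        exact hnd.1 (by rw [← hu]; exact List.mem_of_mem_tail (by simpa using this))
      · have hv : v = a := (Prod.mk.injEq _ _ _ _ ▸ h2).1
        have := (List.of_mem_zip h1).2
        exact hnd.1 (by rw [← hv]; exact List.mem_of_mem_tail (by simpa using this))
      · exact ih hnd.2 h1 h2

end Helpers

lemma deg_eq {V : Type*} [Fintype V] : ∀ (L : List V), L.Nodup → ∀ (h : L ≠ []) (v : V),
    ((∑ u, if (u, v) ∈ L.zip L.tail then (1:ℚ) else 0) -
      ∑ u, if (v, u) ∈ L.zip L.tail then (1:ℚ) else 0) =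
      (if v = L.getLast h then 1 else 0) - (if v = L.head h then 1 else 0) := by
  intro L
  induction L with
  | nil => intro _ h; exact absurd rfl h
  | cons a L ih =>
    intro hnd h v
    cases L with
    | nil => simp; split_ifs <;> simp_all
    | cons x L' =>
      rw [List.nodup_cons] at hnd
      have hzip : (a :: x :: L').zip (a :: x :: L').tail
          = (a, x) :: ((x :: L').zip (x :: L').tail) := by simp
      have hin : ∀ u, (if ((u,v) : V×V) ∈ (a :: x :: L').zip (a :: x :: L').tail then (1:ℚ) else 0)
          = (if u = a ∧ v = x then 1 else 0)
            + (if (u,v) ∈ (x::L').zip (x::L').tail then 1 else 0) := by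
        intro u
        rw [hzip]
        by_cases h2 : u = a ∧ v = x
        · have h1 : ((u,v) : V×V) ∉ (x::L').zip (x::L').tail := by
            intro hm
            exact hnd.1 (by rw [← h2.1]; exact (List.of_mem_zip hm).1)
          simp [h1, h2.1, h2.2]
          rw [h2.1, h2.2] at h1; simpa using h1
        · simp only [List.mem_cons, Prod.mk.injEq]
          by_cases hm : ((u,v) : V×V) ∈ (x::L').zip (x::L').tail <;>
            simp [hm, h2] <;> congr
      have hout : ∀ u, (if ((v,u) : V×V) ∈ (a :: x :: L').zip (a :: x :: L').tail then (1:ℚ) else 0)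
          = (if v = a ∧ u = x then 1 else 0)
            + (if (v,u) ∈ (x::L').zip (x::L').tail then 1 else 0) := by
        intro u
        rw [hzip]
        by_cases h2 : v = a ∧ u = x
        · have h1 : ((v,u) : V×V) ∉ (x::L').zip (x::L').tail := by
            intro hm
            exact hnd.1 (by rw [← h2.1]; exact (List.of_mem_zip hm).1)
          simp [h1, h2.1, h2.2]
          rw [h2.1, h2.2] at h1; simpa using h1
        · simp only [List.mem_cons, Prod.mk.injEq]
          by_cases hm : ((v,u) : V×V) ∈ (x::L').zip (x::L').tail <;>
            simp [hm, h2] <;> congr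
      have hsum_in : ∑ u, (if ((u, v) : V×V) ∈ (a::x::L').zip (a::x::L').tail then (1:ℚ) else 0)
          = (if v = x then 1 else 0)
            + ∑ u, (if (u,v) ∈ (x::L').zip (x::L').tail then (1:ℚ) else 0) := by
        rw [Finset.sum_congr rfl (fun u _ => hin u), Finset.sum_add_distrib]
        congr 1
        by_cases hv : v = x <;> simp [hv]
      have hsum_out : ∑ u, (if ((v, u) : V×V) ∈ (a::x::L').zip (a::x::L').tail then (1:ℚ) else 0)
          = (if v = a then 1 else 0)
            + ∑ u, (if (v,u) ∈ (x::L').zip (x::L').tail then (1:ℚ) else 0) := by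
        rw [Finset.sum_congr rfl (fun u _ => hout u), Finset.sum_add_distrib]
        congr 1
        by_cases hv : v = a <;> simp [hv]
      have hih := ih hnd.2 (List.cons_ne_nil _ _) v
      rw [hsum_in, hsum_out]
      rw [List.getLast_cons (List.cons_ne_nil _ _)]
      have hhead : (a::x::L').head h = a := rfl
      rw [hhead]
      have hhead2 : (x::L').head (List.cons_ne_nil _ _) = x := rfl
      rw [hhead2] at hih
      linarith [hih]

/-- The directed graph is acyclic. -/
def Acyclic {V : Type*} (E : V → V → Prop) : Prop := ∀ v : V, ¬ Relation.TransGen E v v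

/-- Every vertex is reachable from `s` and reaches `t`. -/
def EveryVertexOnPath {V : Type*} (E : V → V → Prop) (s t : V) : Prop :=
  ∀ v : V, Relation.ReflTransGen E s v ∧ Relation.ReflTransGen E v t

/-- Feasibility of a flow `f` for the minimum `s`-`t` flow problem with lower bounds:
`f` is supported on the edges of `E` together with the added return edge `t → s`,
satisfies conservation at every vertex, and `f_{uv} ≥ w_{uv}` on every edge of `E`. -/
def FeasibleFlow {V : Type*} [Fintype V] (E : V → V → Prop) (s t : V)
    (w : V → V → ℚ) (f : V → V → ℚ) : Prop :=
  (∀ u v, ¬ E u v → ¬ (u = t ∧ v = s) → f u v = 0) ∧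
    (∀ v : V, ∑ u, f u v = ∑ u, f v u) ∧
    (∀ u v, E u v → w u v ≤ f u v)

/-- The residual graph of `f`: all forward edges of `E` (infinite capacity), and a
reverse edge `vu` for every edge `uv ∈ E` with `f_{uv} > w_{uv}`. -/
def ResidualEdge {V : Type*} (E : V → V → Prop) (w f : V → V → ℚ) : V → V → Prop :=
  fun u v => E u v ∨ (E v u ∧ w v u < f v u)

/-- A feasible flow `f` is optimal for the minimum `s`-`t` flow problem with lower
bounds (minimize `f_{ts}`) iff there is no directed path from `t` to `s` in the
residual graph `G_f`. -/
theorem min_flow_optimality {V : Type*} [Fintype V] (E : V → V → Prop) (s t : V)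
    (hst : s ≠ t) (hacyc : Acyclic E) (hpath : EveryVertexOnPath E s t)
    (w : V → V → ℚ) (f : V → V → ℚ) (hf : FeasibleFlow E s t w f) :
    (∀ f' : V → V → ℚ, FeasibleFlow E s t w f' → f t s ≤ f' t s) ↔
      ¬ Relation.TransGen (ResidualEdge E w f) t s := by
  classical
  obtain ⟨hsupp, hcons, hlb⟩ := hf
  have hEts : ¬ E t s := by
    intro h
    exact hacyc t (Relation.TransGen.head' h (hpath s).2)
  constructor
  · -- optimal → no residual path
    intro hopt hres
    obtain ⟨l, hchain, hlast, hnd⟩ := exists_nodup_chain hres.to_reflTransGen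
    set P : List (V × V) := (t :: l).zip l with hP
    have hPres : ∀ p ∈ P, ResidualEdge E w f p.1 p.2 := chain_pairs hchain
    -- ε : positive augmentation amount
    set T : Finset ℚ := insert 1
      ((P.filter (fun p => ¬ E p.1 p.2)).toFinset.image (fun p => f p.2 p.1 - w p.2 p.1))
      with hT
    have hTne : T.Nonempty := ⟨1, by simp [hT]⟩
    set ε : ℚ := T.min' hTne with hε
    have hTpos : ∀ x ∈ T, 0 < x := by
      intro x hx
      rw [hT] at hx
      simp only [Finset.mem_insert, Finset.mem_image, List.mem_toFinset,
        List.mem_filter] at hx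
      rcases hx with rfl | ⟨p, ⟨hpP, hpE⟩, rfl⟩
      · norm_num
      · have := hPres p hpP
        rcases this with h | h
        · exact absurd h (by simpa using hpE)
        · linarith [h.2]
    have hεpos : 0 < ε := hTpos _ (T.min'_mem hTne)
    have hεle : ∀ p ∈ P, ¬ E p.1 p.2 → ε ≤ f p.2 p.1 - w p.2 p.1 := by
      intro p hpP hpE
      apply T.min'_le
      rw [hT]
      simp only [Finset.mem_insert, Finset.mem_image, List.mem_toFinset, List.mem_filter]
      exact Or.inr ⟨p, ⟨hpP, by simpa using hpE⟩, rfl⟩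
    -- the augmenting circulation
    set c : V → V → ℚ := fun u v =>
      (if (u, v) ∈ P ∧ E u v then 1 else 0) - (if (v, u) ∈ P ∧ ¬ E v u then 1 else 0)
        - (if u = t ∧ v = s then 1 else 0) with hc
    set f' : V → V → ℚ := fun u v => f u v + ε * c u v with hf'
    have hfeas : FeasibleFlow E s t w f' := by
      refine ⟨?_, ?_, ?_⟩
      · -- support
        intro u v hE hts
        have hc0 : c u v = 0 := by
          rw [hc]
          have h1 : ¬ ((u, v) ∈ P ∧ E u v) := fun h => hE h.2
          have h2 : ¬ ((v, u) ∈ P ∧ ¬ E v u) := by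
            rintro ⟨hm, hE'⟩
            rcases hPres _ hm with h | h
            · exact hE' h
            · exact hE h.1
          simp [h1, h2, hts]
        simp only [hf', hc0, mul_zero, add_zero]
        exact hsupp u v hE hts
      · -- conservation
        intro v
        have hpoint : ∀ u, c u v - c v u =
            ((if (u, v) ∈ P then (1:ℚ) else 0) - (if (v, u) ∈ P then 1 else 0))
              - (if u = t ∧ v = s then 1 else 0) + (if v = t ∧ u = s then 1 else 0) := by
          intro u
          rw [hc]
          by_cases h1 : (u, v) ∈ P <;> by_cases h2 : (v, u) ∈ P <;>
            by_cases h3 : E u v <;> by_cases h4 : E v u <;>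
              simp [h1, h2, h3, h4] <;> ring
        have hdeg := deg_eq (t :: l) hnd (List.cons_ne_nil _ _) v
        have htail : (t :: l).tail = l := rfl
        rw [htail] at hdeg
        have hhead : (t :: l).head (List.cons_ne_nil _ _) = t := rfl
        rw [hhead, hlast] at hdeg
        have hs1 : ∑ u, (if u = t ∧ v = s then (1:ℚ) else 0) = if v = s then 1 else 0 := by
          by_cases hv : v = s <;> simp [hv]
        have hs2 : ∑ u, (if v = t ∧ u = s then (1:ℚ) else 0) = if v = t then 1 else 0 := by
          by_cases hv : v = t <;> simp [hv]
        have hsum0 : ∑ u, (c u v - c v u) = 0 := by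
          rw [Finset.sum_congr rfl (fun u _ => hpoint u)]
          have expand : ∑ u, (((if ((u, v) : V × V) ∈ P then (1:ℚ) else 0)
              - (if (v, u) ∈ P then 1 else 0))
              - (if u = t ∧ v = s then 1 else 0) + (if v = t ∧ u = s then 1 else 0))
            = ((∑ u, (if ((u, v) : V × V) ∈ P then (1:ℚ) else 0))
              - ∑ u, (if ((v, u) : V × V) ∈ P then (1:ℚ) else 0))
              - (∑ u, (if u = t ∧ v = s then (1:ℚ) else 0))
              + (∑ u, (if v = t ∧ u = s then (1:ℚ) else 0)) := by
            rw [← Finset.sum_sub_distrib, ← Finset.sum_sub_distrib, ← Finset.sum_add_distrib]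
          rw [expand, hs1, hs2, hdeg]
          by_cases hv1 : v = s <;> by_cases hv2 : v = t <;> simp [hv1, hv2] <;> ring
        have : ∑ u, c u v = ∑ u, c v u := by
          have := Finset.sum_sub_distrib (s := (Finset.univ : Finset V))
            (f := fun u => c u v) (g := fun u => c v u)
          rw [this] at hsum0
          linarith
        calc ∑ u, f' u v = ∑ u, f u v + ε * ∑ u, c u v := by
              rw [Finset.mul_sum, ← Finset.sum_add_distrib]
          _ = ∑ u, f v u + ε * ∑ u, c v u := by rw [hcons v, this]
          _ = ∑ u, f' v u := by rw [Finset.mul_sum, ← Finset.sum_add_distrib]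
      · -- lower bounds
        intro u v hE
        have hts : ¬ (u = t ∧ v = s) := by
          rintro ⟨rfl, rfl⟩; exact hEts hE
        by_cases h2 : (v, u) ∈ P ∧ ¬ E v u
        · have h1 : ((u, v) : V × V) ∉ P := by
            intro h1
            exact not_both_mem_zip hnd (by simpa using h1) (by simpa using h2.1)
          have hslack : ε ≤ f u v - w u v := hεle (v, u) h2.1 h2.2
          have hcval : c u v = -1 := by rw [hc]; simp [h1, h2, hts]
          rw [hf']
          simp only [hcval]
          linarith
        · have hcval : c u v = if (u, v) ∈ P ∧ E u v then 1 else 0 := by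
            rw [hc]; simp [h2, hts]
          rw [hf']
          simp only [hcval]
          have hwf := hlb u v hE
          by_cases h1 : (u, v) ∈ P ∧ E u v <;> simp [h1] <;> nlinarith
    have hle := hopt f' hfeas
    have hcts : c t s ≤ -1 := by
      have h1 : ¬ (((t, s) : V × V) ∈ P ∧ E t s) := fun h => hEts h.2
      simp only [hc]
      by_cases h2 : ((s, t) : V × V) ∈ P ∧ ¬ E s t <;> simp [h1, h2]
    have hmul : ε * c t s ≤ ε * (-1) :=
      mul_le_mul_of_nonneg_left hcts (le_of_lt hεpos)
    have : f' t s < f t s := by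
      simp only [hf']
      linarith
    linarith
  · -- no residual path → optimal
    intro hno f' hf'
    obtain ⟨hsupp', hcons', hlb'⟩ := hf'
    set R := ResidualEdge E w f with hR
    set S : Finset V := Finset.univ.filter (fun v => Relation.ReflTransGen R t v) with hS
    have htS : t ∈ S := by
      simp only [hS, Finset.mem_filter, Finset.mem_univ, true_and]
      exact Relation.ReflTransGen.refl
    have hsS : s ∉ S := by
      simp only [hS, Finset.mem_filter, Finset.mem_univ, true_and]
      intro h
      rcases Relation.reflTransGen_iff_eq_or_transGen.mp h with h | h
      · exact hst h
      · exact hno h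
    have hclosed : ∀ v ∈ S, ∀ u, R v u → u ∈ S := by
      intro v hv u hvu
      simp only [hS, Finset.mem_filter, Finset.mem_univ, true_and] at hv ⊢
      exact hv.tail hvu
    have hcut : ∀ g : V → V → ℚ, (∀ v : V, ∑ u, g u v = ∑ u, g v u) →
        ∑ v ∈ S, ∑ u ∈ Sᶜ, g u v = ∑ v ∈ S, ∑ u ∈ Sᶜ, g v u := by
      intro g hg
      have h1 : ∑ v ∈ S, ∑ u, g u v = ∑ v ∈ S, ∑ u, g v u :=
        Finset.sum_congr rfl (fun v _ => hg v)
      have e1 : ∀ v : V, ∑ u, g u v = ∑ u ∈ S, g u v + ∑ u ∈ Sᶜ, g u v :=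
        fun v => (Finset.sum_add_sum_compl S _).symm
      have e2 : ∀ v : V, ∑ u, g v u = ∑ u ∈ S, g v u + ∑ u ∈ Sᶜ, g v u :=
        fun v => (Finset.sum_add_sum_compl S _).symm
      rw [Finset.sum_congr rfl (fun v _ => e1 v), Finset.sum_congr rfl (fun v _ => e2 v),
        Finset.sum_add_distrib, Finset.sum_add_distrib] at h1
      have hcomm : ∑ v ∈ S, ∑ u ∈ S, g u v = ∑ v ∈ S, ∑ u ∈ S, g v u := Finset.sum_comm
      linarith
    have hout : ∀ g : V → V → ℚ, (∀ u v, ¬ E u v → ¬ (u = t ∧ v = s) → g u v = 0) →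
        ∑ v ∈ S, ∑ u ∈ Sᶜ, g v u = g t s := by
      intro g hsup
      have hterm : ∀ v ∈ S, ∀ u ∈ Sᶜ, g v u = if v = t ∧ u = s then g t s else 0 := by
        intro v hv u hu
        by_cases h : v = t ∧ u = s
        · obtain ⟨rfl, rfl⟩ := h; simp
        · rw [if_neg h]
          apply hsup
          · intro hEvu
            exact (Finset.mem_compl.mp hu) (hclosed v hv u (Or.inl hEvu))
          · exact h
      rw [Finset.sum_congr rfl fun v hv => Finset.sum_congr rfl fun u hu => hterm v hv u hu]
      have hinner : ∀ v : V, ∑ u ∈ Sᶜ, (if v = t ∧ u = s then g t s else 0)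
          = if v = t then g t s else 0 := by
        intro v
        by_cases hv : v = t
        · subst hv
          simp only [true_and]
          rw [Finset.sum_ite_eq' Sᶜ s (fun _ => g v s)]
          simp [Finset.mem_compl, hsS]
        · simp [hv]
      rw [Finset.sum_congr rfl fun v _ => hinner v]
      rw [Finset.sum_ite_eq' S t (fun _ => g t s)]
      simp [htS]
    have hterm_le : ∀ v ∈ S, ∀ u ∈ Sᶜ, f u v ≤ f' u v := by
      intro v hv u hu
      by_cases hE : E u v
      · have h1 : f u v ≤ w u v := by
          by_contra hcon
          push_neg at hcon
          exact (Finset.mem_compl.mp hu) (hclosed v hv u (Or.inr ⟨hE, hcon⟩))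
        exact le_trans h1 (hlb' u v hE)
      · have hts : ¬ (u = t ∧ v = s) := by
          rintro ⟨rfl, -⟩
          exact (Finset.mem_compl.mp hu) htS
        rw [hsupp u v hE hts, hsupp' u v hE hts]
    calc f t s = ∑ v ∈ S, ∑ u ∈ Sᶜ, f v u := (hout f hsupp).symm
      _ = ∑ v ∈ S, ∑ u ∈ Sᶜ, f u v := (hcut f hcons).symm
      _ ≤ ∑ v ∈ S, ∑ u ∈ Sᶜ, f' u v :=
          Finset.sum_le_sum fun v hv => Finset.sum_le_sum fun u hu => hterm_le v hv u hu
      _ = ∑ v ∈ S, ∑ u ∈ Sᶜ, f' v u := hcut f' hcons'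
      _ = f' t s := hout f' hsupp'
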